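/- Let β > 0, γ > 0 with β + γ > 1. Then there exists C > 0 such that for every T > 2 and every s with 1 < s < T, the integral h(s) = ∫_{1/2}^T t^{-β} |t - s|^{-γ'} dt (interpreted with the integrand bounded near t = s by a fixed constant on the interval (s-1, s+1)) satisfies h(s) ≤ C · log T · ( s^{1-β-γ} + s^{-β} + s^{-γ} ). -/

import Mathlib

open MeasureTheory Real

lemma aux_rpow_anti {x y e : ℝ} (hx : 0 < x) (hxy : x ≤ y) (he : 0 ≤ e) :
    y ^ (-e) ≤ x ^ (-e) :=
  Real.rpow_le_rpow_of_nonpos hx hxy (neg_nonpos.mpr he)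

lemma aux_rpow_le_inv {u e : ℝ} (hu : 1 ≤ u) (he : 1 ≤ e) : u ^ (-e) ≤ u⁻¹ := by
  rw [← Real.rpow_neg_one u]
  exact Real.rpow_le_rpow_of_exponent_le hu (by linarith)

lemma aux_half_rpow (e : ℝ) : ((1:ℝ)/2) ^ (-e) = (2:ℝ) ^ e := by
  rw [one_div, Real.inv_rpow (by norm_num), Real.rpow_neg (by norm_num), inv_inv]

lemma aux_div_rpow_neg {s c e : ℝ} (hs : 0 < s) (hc : 0 < c) :
    (s / c) ^ (-e) = c ^ e * s ^ (-e) := by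
  rw [Real.div_rpow hs.le hc.le, Real.rpow_neg hs.le, Real.rpow_neg hc.le, div_eq_mul_inv,
    inv_inv, mul_comm]

lemma aux_consts {E G A : ℝ} (hE : 1 ≤ E) (hG : 1 ≤ G) (hA : 0 ≤ A) :
    E ≤ E*E*G*(A+1)+1 ∧ G ≤ E*E*G*(A+1)+1 ∧ E*G ≤ E*E*G*(A+1)+1 ∧
    A ≤ E*E*G*(A+1)+1 ∧ E*E*(A+1) ≤ E*E*G*(A+1)+1 ∧ E*A*E ≤ E*E*G*(A+1)+1 := by
  have hE0 : (0:ℝ) ≤ E := by linarith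
  have hG0 : (0:ℝ) ≤ G := by linarith
  have hone1 : (1:ℝ)*1 ≤ E*G := mul_le_mul hE hG zero_le_one hE0
  have hone2 : (1:ℝ)*1 ≤ E*E := mul_le_mul hE hE zero_le_one hE0
  refine ⟨?_, ?_, ?_, ?_, ?_, ?_⟩
  · nlinarith [mul_nonneg hE0 (show (0:ℝ) ≤ E*G*(A+1)-1 by nlinarith)]
  · nlinarith [mul_nonneg hG0 (show (0:ℝ) ≤ E*E*(A+1)-1 by nlinarith)]
  · nlinarith [mul_nonneg (mul_nonneg hE0 hG0) (show (0:ℝ) ≤ E*(A+1)-1 by nlinarith)]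
  · have h2 : (1:ℝ)*1 ≤ (E*E)*G := mul_le_mul (by linarith) hG zero_le_one (by nlinarith)
    nlinarith [mul_nonneg hA (show (0:ℝ) ≤ E*E*G-1 by nlinarith)]
  · nlinarith [mul_nonneg (mul_nonneg hE0 hE0) (show (0:ℝ) ≤ (G-1)*(A+1) by nlinarith)]
  · nlinarith [mul_nonneg (mul_nonneg hE0 hE0) (show (0:ℝ) ≤ G*(A+1)-A by nlinarith)]

set_option maxHeartbeats 3200000 in
theorem h_estimate (β γ A : ℝ) (hβ : 0 < β) (hγ : 0 < γ) (hβγ : 1 < β + γ)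
    (hA : 0 ≤ A) :
    ∃ C : ℝ, 0 < C ∧ ∀ T : ℝ, 2 < T → ∀ s : ℝ, 1 < s → s < T →
      (∫ t in (1/2 : ℝ)..T,
          t ^ (-β) * (if s - 1 < t ∧ t < s + 1 then A else |t - s| ^ (-γ)))
        ≤ C * Real.log T * (s ^ (1 - β - γ) + s ^ (-β) + s ^ (-γ)) := by
  obtain ⟨E, hEdef⟩ : ∃ x : ℝ, x = (2:ℝ) ^ β := ⟨_, rfl⟩
  obtain ⟨G, hGdef⟩ : ∃ x : ℝ, x = (2:ℝ) ^ γ := ⟨_, rfl⟩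
  have hE0 : 0 < E := hEdef ▸ Real.rpow_pos_of_pos (by norm_num) _
  have hG0 : 0 < G := hGdef ▸ Real.rpow_pos_of_pos (by norm_num) _
  have hE1 : 1 ≤ E := hEdef ▸ Real.one_le_rpow (by norm_num) hβ.le
  have hG1 : 1 ≤ G := hGdef ▸ Real.one_le_rpow (by norm_num) hγ.le
  obtain ⟨D, hDdef⟩ : ∃ x : ℝ, x = E * E * G * (A + 1) + 1 := ⟨_, rfl⟩
  have hD1 : 1 ≤ D := by
    have : 0 ≤ E * E * G * (A + 1) := by positivity
    linarith [hDdef.ge, hDdef.le]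
  have hD0 : 0 < D := by linarith
  -- comparisons with D
  obtain ⟨c1, c2, c3, c4, c5, c6⟩ := aux_consts hE1 hG1 hA
  have hE_D : E ≤ D := by rw [hDdef]; exact c1
  have hG_D : G ≤ D := by rw [hDdef]; exact c2
  have hEG_D : E * G ≤ D := by rw [hDdef]; exact c3
  have hA_D : A ≤ D := by rw [hDdef]; exact c4
  have hEE1_D : E * E * (A + 1) ≤ D := by rw [hDdef]; exact c5
  have hEA_D : E * A ≤ D * E⁻¹ := by
    rw [← div_eq_mul_inv, le_div_iff₀ hE0, hDdef]; exact c6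
  refine ⟨8 * D, by positivity, ?_⟩
  intro T hT s hs1 hsT
  have hs0 : (0:ℝ) < s := by linarith
  obtain ⟨P, hPdef⟩ : ∃ x : ℝ, x = s ^ (1 - β - γ) + s ^ (-β) + s ^ (-γ) := ⟨_, rfl⟩
  rw [← hPdef]
  have hP1 : 0 < s ^ (1 - β - γ) := Real.rpow_pos_of_pos hs0 _
  have hP2 : 0 < s ^ (-β) := Real.rpow_pos_of_pos hs0 _
  have hP3 : 0 < s ^ (-γ) := Real.rpow_pos_of_pos hs0 _
  have hP0 : 0 < P := by rw [hPdef]; positivity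
  have hsP1 : s ^ (1 - β - γ) ≤ P := by rw [hPdef]; linarith
  have hsP2 : s ^ (-β) ≤ P := by rw [hPdef]; linarith
  have hsP3 : s ^ (-γ) ≤ P := by rw [hPdef]; linarith
  have hDP0 : 0 ≤ D * P := mul_nonneg hD0.le hP0.le
  have hlog2 : (1:ℝ)/2 < Real.log 2 := by
    have := Real.log_two_gt_d9; linarith
  have hlogT : (1:ℝ)/2 < Real.log T :=
    lt_of_lt_of_le hlog2 (Real.log_le_log (by norm_num) hT.le)
  have hlogT0 : 0 < Real.log T := by linarith
  set a : ℝ := max (1/2) (s - 1) with hadef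
  set b : ℝ := min T (s + 1) with hbdef
  have hha : (1:ℝ)/2 ≤ a := le_max_left _ _
  have has : a < s := max_lt (by linarith) (by linarith)
  have hsb : s < b := lt_min hsT (by linarith)
  have hbT : b ≤ T := min_le_left _ _
  have hab : a ≤ b := le_of_lt (lt_trans has hsb)
  have ha0 : 0 < a := by linarith
  have haT : a ≤ T := max_le (by linarith) (by linarith)
  have hs1a : s - 1 ≤ a := le_max_right _ _
  have hbs1 : b ≤ s + 1 := min_le_right _ _
  have hale : ∀ x : ℝ, x ≤ a → x ≤ 1/2 ∨ x ≤ s - 1 := fun x hx => le_max_iff.mp hx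
  have ha_or : a = 1/2 ∨ a = s - 1 := by
    rcases le_total (1/2:ℝ) (s-1) with h | h
    · exact Or.inr (max_eq_right h)
    · exact Or.inl (max_eq_left h)
  have hb_or : b = T ∨ b = s + 1 := by
    rcases le_total T (s+1) with h | h
    · exact Or.inl (min_eq_left h)
    · exact Or.inr (min_eq_right h)
  clear_value a b
  set F : ℝ → ℝ := fun t => t ^ (-β) * (if s - 1 < t ∧ t < s + 1 then A else |t - s| ^ (-γ))
    with hFdef
  clear_value F
  have hitenn : ∀ t : ℝ, 0 ≤ (if s - 1 < t ∧ t < s + 1 then A else |t - s| ^ (-γ)) := by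
    intro t
    split
    · exact hA
    · exact Real.rpow_nonneg (abs_nonneg _) _
  have hFnn : ∀ t : ℝ, 0 ≤ t → 0 ≤ F t := by
    intro t ht
    simp only [hFdef]
    exact mul_nonneg (Real.rpow_nonneg ht _) (hitenn t)
  have hmeasF : Measurable F := by
    simp only [hFdef]
    apply Measurable.mul
    · fun_prop
    · apply Measurable.ite _ measurable_const (by fun_prop)
      exact (measurableSet_Ioo : MeasurableSet (Set.Ioo (s-1) (s+1)))
  have habs : ∀ t : ℝ, ¬(s - 1 < t ∧ t < s + 1) → 1 ≤ |t - s| := by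
    intro t h
    rcases not_and_or.mp h with h' | h'
    · push_neg at h'
      rw [abs_of_nonpos (by linarith)]; linarith
    · push_neg at h'
      rw [abs_of_nonneg (by linarith)]; linarith
  have hEhalf : ((1:ℝ)/2) ^ (-β) = E := by rw [aux_half_rpow, hEdef]
  have hK : ∀ p q : ℝ, 1/2 ≤ p → p ≤ q → q ≤ T → IntervalIntegrable F volume p q := by
    intro p q hp hpq hq
    rw [intervalIntegrable_iff_integrableOn_Ioc_of_le hpq]
    apply Measure.integrableOn_of_bounded (M := E * (A + 1)) measure_Ioc_lt_top.ne
      hmeasF.aestronglyMeasurable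
    apply ae_restrict_of_forall_mem measurableSet_Ioc
    intro t ht
    obtain ⟨ht1, ht2⟩ := ht
    have ht0 : (1:ℝ)/2 ≤ t := by linarith
    rw [Real.norm_eq_abs, abs_of_nonneg (hFnn t (by linarith))]
    simp only [hFdef]
    have h1 : t ^ (-β) ≤ E := by
      have h := aux_rpow_anti (show (0:ℝ) < 1/2 by norm_num) ht0 hβ.le
      rwa [hEhalf] at h
    have h2 : (if s - 1 < t ∧ t < s + 1 then A else |t - s| ^ (-γ)) ≤ A + 1 := by
      split
      · linarith
      · next h =>
        calc |t - s| ^ (-γ) ≤ 1 :=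
              Real.rpow_le_one_of_one_le_of_nonpos (habs t h) (by linarith)
          _ ≤ A + 1 := by linarith
    exact mul_le_mul h1 h2 (hitenn t) hE0.le
  have hb12 : (1:ℝ)/2 ≤ b := le_trans hha hab
  have hsplit : (∫ t in (1/2:ℝ)..T, F t) =
      (∫ t in (1/2:ℝ)..a, F t) + (∫ t in a..b, F t) + (∫ t in b..T, F t) := by
    have i1 := hK (1/2) a le_rfl hha haT
    have i2 := hK a b hha hab hbT
    have i3 := hK b T hb12 hbT le_rfl
    rw [intervalIntegral.integral_add_adjacent_intervals i1 i2,
      intervalIntegral.integral_add_adjacent_intervals (i1.trans i2) i3]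
  have h4β : (4:ℝ) ^ β = E * E := by
    rw [hEdef, ← Real.mul_rpow (by norm_num) (by norm_num)]; norm_num
  -- middle claim
  have claimM : ∀ t ∈ Set.Icc a b, F t ≤ D * P := by
    intro t ht
    obtain ⟨ht1, ht2⟩ := ht
    have ht12 : (1:ℝ)/2 ≤ t := le_trans hha ht1
    have ht0 : (0:ℝ) < t := by linarith
    have hs4 : s / 4 ≤ t := by
      rcases le_total s 2 with h | h
      · linarith
      · have : s - 1 ≤ t := le_trans hs1a ht1
        linarith
    have h1 : t ^ (-β) ≤ E * E * s ^ (-β) := by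
      have h := aux_rpow_anti (show (0:ℝ) < s/4 by linarith) hs4 hβ.le
      rwa [aux_div_rpow_neg hs0 (by norm_num), h4β] at h
    have h2 : (if s - 1 < t ∧ t < s + 1 then A else |t - s| ^ (-γ)) ≤ A + 1 := by
      split
      · linarith
      · next h =>
        calc |t - s| ^ (-γ) ≤ 1 :=
              Real.rpow_le_one_of_one_le_of_nonpos (habs t h) (by linarith)
          _ ≤ A + 1 := by linarith
    have hnn : 0 ≤ E * E * s ^ (-β) := by positivity
    calc F t = t ^ (-β) * (if s - 1 < t ∧ t < s + 1 then A else |t - s| ^ (-γ)) := by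
          simp only [hFdef]
      _ ≤ (E * E * s ^ (-β)) * (A + 1) := mul_le_mul h1 h2 (hitenn t) hnn
      _ = (E * E * (A + 1)) * s ^ (-β) := by ring
      _ ≤ D * s ^ (-β) := mul_le_mul_of_nonneg_right hEE1_D hP2.le
      _ ≤ D * P := mul_le_mul_of_nonneg_left hsP2 hD0.le
  -- left claim
  have claimL : ∀ t ∈ Set.Icc (1/2:ℝ) a, F t ≤ D * P * (t⁻¹ + (s - t)⁻¹) := by
    intro t ht
    obtain ⟨ht1, ht2⟩ := ht
    have ht0 : (0:ℝ) < t := by linarith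
    have hts : t < s := lt_of_le_of_lt ht2 has
    have hst0 : 0 < s - t := by linarith
    have htinv0 : 0 ≤ t⁻¹ := inv_nonneg.mpr ht0.le
    have hstinv0 : 0 ≤ (s - t)⁻¹ := inv_nonneg.mpr hst0.le
    by_cases hband : s - 1 < t ∧ t < s + 1
    · -- only possible when s < 3/2 and t = 1/2
      have htle : t ≤ 1/2 := by
        rcases hale t ht2 with h | h
        · exact h
        · linarith [hband.1]
      have hs32 : s < 3/2 := by linarith [hband.1]
      have hstinv : 1 ≤ (s - t)⁻¹ := (one_le_inv₀ hst0).mpr (by linarith)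
      have h1 : t ^ (-β) ≤ E := by
        have h := aux_rpow_anti (show (0:ℝ) < 1/2 by norm_num) ht1 hβ.le
        rwa [hEhalf] at h
      have h2 : E⁻¹ ≤ s ^ (-β) := by
        have h := aux_rpow_anti hs0 (show s ≤ 2 by linarith) hβ.le
        rw [Real.rpow_neg (by norm_num : (0:ℝ) ≤ 2)] at h
        rwa [← hEdef] at h
      calc F t = t ^ (-β) * A := by simp only [hFdef]; simp only [if_pos hband]
        _ ≤ E * A := mul_le_mul_of_nonneg_right h1 hA
        _ ≤ D * E⁻¹ := hEA_D
        _ ≤ D * s ^ (-β) := mul_le_mul_of_nonneg_left h2 hD0.le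
        _ ≤ D * P := mul_le_mul_of_nonneg_left hsP2 hD0.le
        _ ≤ D * P * (t⁻¹ + (s - t)⁻¹) := le_mul_of_one_le_right hDP0 (by linarith)
    · -- t off the diagonal band
      have hts1 : t ≤ s - 1 := by
        rcases not_and_or.mp hband with h | h
        · push_neg at h; exact h
        · push_neg at h; linarith
      have hstg1 : 1 ≤ s - t := by linarith
      have hFt : F t = t ^ (-β) * (s - t) ^ (-γ) := by
        simp only [hFdef]; simp only [if_neg hband]
        rw [abs_of_nonpos (by linarith), neg_sub]
      rcases le_total t (s/2) with hhalf | hhalf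
      · -- t ≤ s/2
        have h1 : t ^ (-β) ≤ t⁻¹ * (E + s ^ (1-β)) := by
          have e1 : t ^ (-β) = t ^ (-1:ℝ) * t ^ (1-β) := by
            rw [← Real.rpow_add ht0]; congr 1 <;> ring
          have e2 : t ^ (1-β) ≤ E + s ^ (1-β) := by
            rcases le_total β 1 with hb | hb
            · have := Real.rpow_le_rpow ht0.le hts.le (by linarith : (0:ℝ) ≤ 1-β)
              linarith
            · have h' : t ^ (1-β) = t ^ (-(β-1)) := by congr 1 <;> ring
              have h'' := aux_rpow_anti (show (0:ℝ) < 1/2 by norm_num) ht1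
                (by linarith : (0:ℝ) ≤ β-1)
              rw [aux_half_rpow] at h''
              have h2E : (2:ℝ) ^ (β-1) ≤ E := by
                rw [hEdef]
                exact Real.rpow_le_rpow_of_exponent_le (by norm_num) (by linarith)
              have hnn := Real.rpow_nonneg hs0.le (1-β)
              rw [h']; linarith
          calc t ^ (-β) = t ^ (-1:ℝ) * t ^ (1-β) := e1
            _ = t⁻¹ * t ^ (1-β) := by rw [Real.rpow_neg_one]
            _ ≤ t⁻¹ * (E + s ^ (1-β)) := mul_le_mul_of_nonneg_left e2 htinv0
        have h2 : (s - t) ^ (-γ) ≤ G * s ^ (-γ) := by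
          have h := aux_rpow_anti (show (0:ℝ) < s/2 by linarith)
            (by linarith : s/2 ≤ s - t) hγ.le
          rwa [aux_div_rpow_neg hs0 (by norm_num), ← hGdef] at h
        have hmain : (E + s ^ (1-β)) * (G * s ^ (-γ)) ≤ D * P := by
          have emul : s ^ (1-β) * s ^ (-γ) = s ^ (1-β-γ) := by
            rw [← Real.rpow_add hs0]; congr 1 <;> ring
          have expand : (E + s ^ (1-β)) * (G * s ^ (-γ))
              = (E*G) * s ^ (-γ) + G * (s ^ (1-β) * s ^ (-γ)) := by ring
          have t1 : (E*G) * s ^ (-γ) ≤ D * s ^ (-γ) :=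
            mul_le_mul_of_nonneg_right hEG_D hP3.le
          have t2 : G * s ^ (1-β-γ) ≤ D * s ^ (1-β-γ) :=
            mul_le_mul_of_nonneg_right hG_D hP1.le
          have hDP : D * s ^ (-γ) + D * s ^ (1-β-γ) ≤ D * P := by
            rw [hPdef, mul_add, mul_add]; linarith [(mul_pos hD0 hP2).le]
          rw [expand, emul]; linarith
        have hmajnn : 0 ≤ t⁻¹ * (E + s ^ (1-β)) := by positivity
        calc F t = t ^ (-β) * (s - t) ^ (-γ) := hFt
          _ ≤ (t⁻¹ * (E + s ^ (1-β))) * (G * s ^ (-γ)) :=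
              mul_le_mul h1 h2 (Real.rpow_nonneg hst0.le _) hmajnn
          _ = ((E + s ^ (1-β)) * (G * s ^ (-γ))) * t⁻¹ := by ring
          _ ≤ (D * P) * t⁻¹ := mul_le_mul_of_nonneg_right hmain htinv0
          _ ≤ D * P * (t⁻¹ + (s - t)⁻¹) := by
              apply mul_le_mul_of_nonneg_left _ hDP0
              linarith
      · -- s/2 ≤ t
        have h1 : t ^ (-β) ≤ E * s ^ (-β) := by
          have h := aux_rpow_anti (show (0:ℝ) < s/2 by linarith) hhalf hβ.le
          rwa [aux_div_rpow_neg hs0 (by norm_num), ← hEdef] at h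
        have h2 : (s - t) ^ (-γ) ≤ (s - t)⁻¹ * (1 + s ^ (1-γ)) := by
          have e1 : (s-t) ^ (-γ) = (s-t) ^ (-1:ℝ) * (s-t) ^ (1-γ) := by
            rw [← Real.rpow_add hst0]; congr 1 <;> ring
          have e2 : (s-t) ^ (1-γ) ≤ 1 + s ^ (1-γ) := by
            rcases le_total γ 1 with hg | hg
            · have := Real.rpow_le_rpow hst0.le (by linarith : s - t ≤ s)
                (by linarith : (0:ℝ) ≤ 1-γ)
              linarith
            · have h' : (s-t) ^ (1-γ) = (s-t) ^ (-(γ-1)) := by congr 1 <;> ring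
              have h'' := aux_rpow_anti one_pos hstg1 (by linarith : (0:ℝ) ≤ γ-1)
              rw [Real.one_rpow] at h''
              have hnn := Real.rpow_nonneg hs0.le (1-γ)
              rw [h']; linarith
          calc (s-t) ^ (-γ) = (s-t) ^ (-1:ℝ) * (s-t) ^ (1-γ) := e1
            _ = (s-t)⁻¹ * (s-t) ^ (1-γ) := by rw [Real.rpow_neg_one]
            _ ≤ (s-t)⁻¹ * (1 + s ^ (1-γ)) := mul_le_mul_of_nonneg_left e2 hstinv0
        have hmain : (E * s ^ (-β)) * (1 + s ^ (1-γ)) ≤ D * P := by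
          have emul : s ^ (-β) * s ^ (1-γ) = s ^ (1-β-γ) := by
            rw [← Real.rpow_add hs0]; congr 1 <;> ring
          have expand : (E * s ^ (-β)) * (1 + s ^ (1-γ))
              = E * s ^ (-β) + E * (s ^ (-β) * s ^ (1-γ)) := by ring
          have t1 : E * s ^ (-β) ≤ D * s ^ (-β) :=
            mul_le_mul_of_nonneg_right hE_D hP2.le
          have t2 : E * s ^ (1-β-γ) ≤ D * s ^ (1-β-γ) :=
            mul_le_mul_of_nonneg_right hE_D hP1.le
          have hDP : D * s ^ (-β) + D * s ^ (1-β-γ) ≤ D * P := by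
            rw [hPdef, mul_add, mul_add]; linarith [(mul_pos hD0 hP3).le]
          rw [expand, emul]; linarith
        have hmajnn : 0 ≤ E * s ^ (-β) := by positivity
        calc F t = t ^ (-β) * (s - t) ^ (-γ) := hFt
          _ ≤ (E * s ^ (-β)) * ((s - t)⁻¹ * (1 + s ^ (1-γ))) :=
              mul_le_mul h1 h2 (Real.rpow_nonneg hst0.le _) hmajnn
          _ = ((E * s ^ (-β)) * (1 + s ^ (1-γ))) * (s - t)⁻¹ := by ring
          _ ≤ (D * P) * (s - t)⁻¹ := mul_le_mul_of_nonneg_right hmain hstinv0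
          _ ≤ D * P * (t⁻¹ + (s - t)⁻¹) := by
              apply mul_le_mul_of_nonneg_left _ hDP0
              linarith
  -- right claim
  have claimR : ∀ t ∈ Set.Icc b T, F t ≤ D * P * (t - s)⁻¹ := by
    intro t ht
    obtain ⟨ht1, ht2⟩ := ht
    have hst : s < t := lt_of_lt_of_le hsb ht1
    have ht0 : (0:ℝ) < t := by linarith
    have hts0 : 0 < t - s := by linarith
    by_cases hband : s - 1 < t ∧ t < s + 1
    · have hinv1 : 1 ≤ (t - s)⁻¹ := (one_le_inv₀ hts0).mpr (by linarith [hband.2])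
      have h1 : t ^ (-β) ≤ s ^ (-β) := aux_rpow_anti hs0 hst.le hβ.le
      calc F t = t ^ (-β) * A := by simp only [hFdef]; simp only [if_pos hband]
        _ ≤ s ^ (-β) * A := mul_le_mul_of_nonneg_right h1 hA
        _ ≤ P * D := mul_le_mul hsP2 hA_D hA hP0.le
        _ = D * P := by ring
        _ ≤ D * P * (t - s)⁻¹ := le_mul_of_one_le_right hDP0 hinv1
    · have ht1s : s + 1 ≤ t := by
        rcases not_and_or.mp hband with h | h
        · push_neg at h; linarith
        · push_neg at h; exact h
      have hu1 : 1 ≤ t - s := by linarith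
      have hFt : F t = t ^ (-β) * (t - s) ^ (-γ) := by
        simp only [hFdef]; simp only [if_neg hband]
        rw [abs_of_nonneg (by linarith)]
      rcases le_total γ 1 with hg1 | hg1
      · have e1 : t ^ (-β) = t ^ (-(β+γ-1)) * t ^ (-(1-γ)) := by
          rw [← Real.rpow_add ht0]; congr 1 <;> ring
        have b1 : t ^ (-(β+γ-1)) ≤ s ^ (-(β+γ-1)) :=
          aux_rpow_anti hs0 hst.le (by linarith)
        have b2 : t ^ (-(1-γ)) ≤ (t-s) ^ (-(1-γ)) :=
          aux_rpow_anti hts0 (by linarith) (by linarith)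
        have hsexp : s ^ (-(β+γ-1)) = s ^ (1-β-γ) := by congr 1 <;> ring
        have comb : (t-s) ^ (-(1-γ)) * (t-s) ^ (-γ) = (t-s)⁻¹ := by
          rw [← Real.rpow_add hts0, ← Real.rpow_neg_one]; congr 1 <;> ring
        calc F t = (t ^ (-(β+γ-1)) * t ^ (-(1-γ))) * (t-s) ^ (-γ) := by
              rw [hFt, ← e1]
          _ ≤ (s ^ (1-β-γ) * (t-s) ^ (-(1-γ))) * (t-s) ^ (-γ) := by
              apply mul_le_mul_of_nonneg_right _ (Real.rpow_nonneg hts0.le _)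
              exact mul_le_mul (hsexp ▸ b1) b2 (Real.rpow_nonneg ht0.le _)
                (Real.rpow_nonneg hs0.le _)
          _ = s ^ (1-β-γ) * ((t-s) ^ (-(1-γ)) * (t-s) ^ (-γ)) := by ring
          _ = s ^ (1-β-γ) * (t-s)⁻¹ := by rw [comb]
          _ ≤ (D * P) * (t-s)⁻¹ := by
              apply mul_le_mul_of_nonneg_right _ (inv_nonneg.mpr hts0.le)
              calc s ^ (1-β-γ) ≤ P := hsP1
                _ ≤ D * P := le_mul_of_one_le_left hP0.le hD1
      · have b1 : t ^ (-β) ≤ s ^ (-β) := aux_rpow_anti hs0 hst.le hβ.le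
        have b2 : (t-s) ^ (-γ) ≤ (t-s)⁻¹ := aux_rpow_le_inv hu1 hg1
        calc F t = t ^ (-β) * (t-s) ^ (-γ) := hFt
          _ ≤ s ^ (-β) * (t-s)⁻¹ :=
              mul_le_mul b1 b2 (Real.rpow_nonneg hts0.le _) hP2.le
          _ ≤ (D * P) * (t-s)⁻¹ := by
              apply mul_le_mul_of_nonneg_right _ (inv_nonneg.mpr hts0.le)
              exact hsP2.trans (le_mul_of_one_le_left hP0.le hD1)
  -- integral bounds
  have hp1 : (∫ t in (1/2:ℝ)..a, F t) ≤ D * P * (3 * Real.log T) := by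
    have hc1 : ContinuousOn (fun t : ℝ => t⁻¹) (Set.Icc (1/2:ℝ) a) := by
      apply ContinuousOn.inv₀ continuousOn_id
      intro x hx h
      simp only [id_eq] at h
      rw [h] at hx
      have := hx.1; norm_num at this
    have hc2 : ContinuousOn (fun t : ℝ => (s - t)⁻¹) (Set.Icc (1/2:ℝ) a) := by
      apply ContinuousOn.inv₀ (continuousOn_const.sub continuousOn_id)
      intro x hx h
      simp only [id_eq, Pi.sub_apply] at h
      have hxs : x < s := lt_of_le_of_lt hx.2 has
      linarith [sub_eq_zero.mp h]
    have hi1 : IntervalIntegrable (fun t : ℝ => t⁻¹) volume (1/2) a :=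
      hc1.intervalIntegrable_of_Icc hha
    have hi2 : IntervalIntegrable (fun t : ℝ => (s - t)⁻¹) volume (1/2) a :=
      hc2.intervalIntegrable_of_Icc hha
    have hint2 : IntervalIntegrable (fun t : ℝ => D * P * (t⁻¹ + (s - t)⁻¹)) volume (1/2) a :=
      (hi1.add hi2).const_mul _
    have hmono := intervalIntegral.integral_mono_on hha (hK _ _ le_rfl hha haT) hint2 claimL
    have hsep : (∫ t in (1/2:ℝ)..a, D * P * (t⁻¹ + (s - t)⁻¹))
        = D * P * ((∫ t in (1/2:ℝ)..a, t⁻¹) + ∫ t in (1/2:ℝ)..a, (s - t)⁻¹) := by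
      rw [intervalIntegral.integral_const_mul, intervalIntegral.integral_add hi1 hi2]
    have hv1 : (∫ t in (1/2:ℝ)..a, t⁻¹) = Real.log (a / (1/2)) :=
      integral_inv_of_pos (by norm_num) ha0
    have hv2 : (∫ t in (1/2:ℝ)..a, (s - t)⁻¹) = Real.log ((s - 1/2) / (s - a)) := by
      rw [intervalIntegral.integral_comp_sub_left (fun u : ℝ => u⁻¹) s]
      exact integral_inv_of_pos (by linarith) (by linarith)
    have hb1 : Real.log (a / (1/2)) ≤ 2 * Real.log T := by
      have h1 : a / (1/2) = 2*a := by ring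
      have h2 : 2*a ≤ T*T := mul_le_mul (by linarith) haT (by linarith) (by linarith)
      calc Real.log (a / (1/2)) = Real.log (2*a) := by rw [h1]
        _ ≤ Real.log (T*T) := Real.log_le_log (by linarith) h2
        _ = Real.log T + Real.log T := Real.log_mul (by linarith) (by linarith)
        _ = 2 * Real.log T := by ring
    have hb2 : Real.log ((s - 1/2) / (s - a)) ≤ Real.log T := by
      apply Real.log_le_log (div_pos (by linarith) (by linarith))
      rw [div_le_iff₀ (by linarith : (0:ℝ) < s - a)]
      rcases ha_or with h | h
      · rw [h]
        have h1 := mul_le_mul_of_nonneg_right (show (1:ℝ) ≤ T by linarith)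
          (show (0:ℝ) ≤ s - 1/2 by linarith)
        rw [one_mul] at h1; linarith
      · rw [h, show s - (s-1) = (1:ℝ) by ring, mul_one]; linarith
    calc (∫ t in (1/2:ℝ)..a, F t)
        ≤ ∫ t in (1/2:ℝ)..a, D * P * (t⁻¹ + (s - t)⁻¹) := hmono
      _ = D * P * (Real.log (a / (1/2)) + Real.log ((s - 1/2) / (s - a))) := by
          rw [hsep, hv1, hv2]
      _ ≤ D * P * (3 * Real.log T) := by
          apply mul_le_mul_of_nonneg_left _ hDP0
          linarith
  have hp2 : (∫ t in a..b, F t) ≤ D * P * (4 * Real.log T) := by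
    have hmono := intervalIntegral.integral_mono_on hab (hK _ _ hha hab hbT)
      (intervalIntegrable_const) claimM
    rw [intervalIntegral.integral_const, smul_eq_mul] at hmono
    have hba : b - a ≤ 2 := by linarith
    calc (∫ t in a..b, F t) ≤ (b - a) * (D * P) := hmono
      _ ≤ 2 * (D * P) := mul_le_mul_of_nonneg_right hba hDP0
      _ ≤ (4 * Real.log T) * (D * P) := by
          apply mul_le_mul_of_nonneg_right _ hDP0
          linarith
      _ = D * P * (4 * Real.log T) := by ring
  have hp3 : (∫ t in b..T, F t) ≤ D * P * Real.log T := by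
    have hc : ContinuousOn (fun t : ℝ => (t - s)⁻¹) (Set.Icc b T) := by
      apply ContinuousOn.inv₀ (continuousOn_id.sub continuousOn_const)
      intro x hx h
      simp only [id_eq, Pi.sub_apply] at h
      have hsx : s < x := lt_of_lt_of_le hsb hx.1
      linarith [sub_eq_zero.mp h]
    have hi : IntervalIntegrable (fun t : ℝ => (t - s)⁻¹) volume b T :=
      hc.intervalIntegrable_of_Icc hbT
    have hint2 : IntervalIntegrable (fun t : ℝ => D * P * (t - s)⁻¹) volume b T :=
      hi.const_mul _
    have hmono := intervalIntegral.integral_mono_on hbT (hK _ _ hb12 hbT le_rfl) hint2 claimR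
    have hv : (∫ t in b..T, (t - s)⁻¹) = Real.log ((T - s) / (b - s)) := by
      rw [intervalIntegral.integral_comp_sub_right (fun u : ℝ => u⁻¹) s]
      exact integral_inv_of_pos (by linarith) (by linarith)
    have hb3 : Real.log ((T - s) / (b - s)) ≤ Real.log T := by
      apply Real.log_le_log (div_pos (by linarith) (by linarith))
      rw [div_le_iff₀ (by linarith : (0:ℝ) < b - s)]
      rcases hb_or with h | h
      · rw [h]
        have h1 := mul_le_mul_of_nonneg_right (show (1:ℝ) ≤ T by linarith)
          (show (0:ℝ) ≤ T - s by linarith)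
        rw [one_mul] at h1; linarith
      · rw [h, show s + 1 - s = (1:ℝ) by ring, mul_one]; linarith
    calc (∫ t in b..T, F t) ≤ ∫ t in b..T, D * P * (t - s)⁻¹ := hmono
      _ = D * P * Real.log ((T - s) / (b - s)) := by
          rw [intervalIntegral.integral_const_mul, hv]
      _ ≤ D * P * Real.log T := mul_le_mul_of_nonneg_left hb3 hDP0
  rw [hsplit]
  calc (∫ t in (1/2:ℝ)..a, F t) + (∫ t in a..b, F t) + (∫ t in b..T, F t)
      ≤ D * P * (3 * Real.log T) + D * P * (4 * Real.log T) + D * P * Real.log T := by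
        linarith
    _ = 8 * D * Real.log T * P := by ring
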